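/- Let M be a prime and Q a positive integer with gcd(M, Q) = 1, let p be a prime with p | Q, and let ψ be a Dirichlet character modulo p. Let m be any integer and let n be an integer with gcd(n, M) = 1. Then S_ψ(M·m, n; Q·M) = − S_ψ(m, n·M̄; Q), where M̄ denotes an integer inverse of M modulo Q. -/

import Mathlib

open Complex

/-- `eAdd q x = exp(2πi x / q)`. -/
noncomputable def eAdd (q : ℕ) (x : ℤ) : ℂ :=
  Complex.exp (2 * Real.pi * Complex.I * x / q)

/-- The Kloosterman sum `S(m, n; q) = ∑_{x mod q, (x,q)=1} e_q(m x + n x*)`. -/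
noncomputable def klo (m n : ℤ) (q : ℕ) [NeZero q] : ℂ :=
  ∑ x : (ZMod q)ˣ,
    eAdd q (m * ((x : ZMod q).val : ℤ) + n * (((x⁻¹ : (ZMod q)ˣ) : ZMod q).val : ℤ))

/-- The twisted Kloosterman sum `S_ψ(m, n; q)` for a Dirichlet character `ψ` mod `d`, `d ∣ q`. -/
noncomputable def kloTwist {d : ℕ} (ψ : DirichletCharacter ℂ d) (m n : ℤ) (q : ℕ)
    [NeZero q] (h : d ∣ q) : ℂ :=
  ∑ x : (ZMod q)ˣ,
    ψ (ZMod.castHom h (ZMod d) (x : ZMod q)) *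
      eAdd q (m * ((x : ZMod q).val : ℤ) + n * (((x⁻¹ : (ZMod q)ˣ) : ZMod q).val : ℤ))

lemma eAdd_add (q : ℕ) (x y : ℤ) : eAdd q (x + y) = eAdd q x * eAdd q y := by
  rw [eAdd, eAdd, eAdd, ← Complex.exp_add]
  congr 1
  push_cast
  ring

lemma eAdd_qmul (q : ℕ) (hq : q ≠ 0) (k : ℤ) : eAdd q ((q : ℤ) * k) = 1 := by
  have hq' : (q : ℂ) ≠ 0 := Nat.cast_ne_zero.mpr hq
  rw [eAdd, show (2 * (Real.pi:ℂ) * Complex.I * ((q:ℤ) * k : ℤ)) / q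
      = (k : ℤ) * (2 * (Real.pi:ℂ) * Complex.I) by push_cast; field_simp]
  exact Complex.exp_int_mul_two_pi_mul_I k

lemma eAdd_congr {q : ℕ} [NeZero q] {x y : ℤ} (h : ((x : ZMod q) = (y : ZMod q))) :
    eAdd q x = eAdd q y := by
  obtain ⟨k, hk⟩ : (q : ℤ) ∣ x - y := by
    rwa [← ZMod.intCast_zmod_eq_zero_iff_dvd, Int.cast_sub, sub_eq_zero]
  have hx : x = y + q * k := by omega
  rw [hx, eAdd_add, eAdd_qmul q (NeZero.ne q), mul_one]

lemma eAdd_mul_left (Q M : ℕ) (hM : M ≠ 0) (w : ℤ) :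
    eAdd (Q * M) ((M : ℤ) * w) = eAdd Q w := by
  have hM' : (M : ℂ) ≠ 0 := Nat.cast_ne_zero.mpr hM
  rw [eAdd, eAdd]
  congr 1
  push_cast
  by_cases hQ : (Q : ℂ) = 0
  · simp [hQ]
  · field_simp

lemma eAdd_split (Q M : ℕ) (hQ : Q ≠ 0) (hM : M ≠ 0) (u v z : ℤ)
    (huv : (M : ℤ) * u + (Q : ℤ) * v = 1) :
    eAdd (Q * M) z = eAdd Q (u * z) * eAdd M (v * z) := by
  have : z = (M : ℤ) * (u * z) + (Q : ℤ) * (v * z) := by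
    have := congrArg (· * z) huv
    simpa [add_mul, mul_assoc] using this.symm
  calc eAdd (Q * M) z = eAdd (Q * M) ((M : ℤ) * (u * z) + (Q : ℤ) * (v * z)) := by rw [← this]
    _ = eAdd (Q * M) ((M : ℤ) * (u * z)) * eAdd (Q * M) ((Q : ℤ) * (v * z)) := eAdd_add _ _ _
    _ = eAdd Q (u * z) * eAdd M (v * z) := by
        rw [eAdd_mul_left Q M hM, show Q * M = M * Q from Nat.mul_comm _ _, eAdd_mul_left M Q hQ]

lemma eAdd_natCast_eq_pow (M : ℕ) (k : ℕ) :
    eAdd M ((k : ℕ) : ℤ) = Complex.exp (2 * Real.pi * Complex.I / M) ^ k := by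
  rw [← Complex.exp_nat_mul, eAdd]
  congr 1
  push_cast
  ring

lemma sum_eAdd_zmod (M : ℕ) [NeZero M] (hM : 1 < M) :
    ∑ t : ZMod M, eAdd M ((t.val : ℤ)) = 0 := by
  have hM0 : M ≠ 0 := NeZero.ne M
  have h0 := (Complex.isPrimitiveRoot_exp M hM0).geom_sum_eq_zero hM
  rw [← h0]
  refine Finset.sum_nbij' (fun t => t.val) (fun k => (k : ZMod M)) ?_ ?_ ?_ ?_ ?_
  · exact fun a _ => Finset.mem_range.mpr (ZMod.val_lt a)
  · exact fun a _ => Finset.mem_univ _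
  · exact fun a _ => by simp [ZMod.natCast_val, ZMod.cast_id]
  · exact fun a ha => by
      simp [ZMod.val_natCast, Nat.mod_eq_of_lt (Finset.mem_range.mp ha)]
  · exact fun a _ => eAdd_natCast_eq_pow M a.val

lemma sum_units_eAdd (M : ℕ) [NeZero M] (hM : M.Prime) :
    ∑ b : (ZMod M)ˣ, eAdd M (((b : ZMod M).val : ℤ)) = -1 := by
  haveI : Fact M.Prime := ⟨hM⟩
  have key : ∑ t : ZMod M, eAdd M ((t.val : ℤ)) = 0 := sum_eAdd_zmod M hM.one_lt
  have hsplit : ∑ t : ZMod M, eAdd M ((t.val : ℤ))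
      = eAdd M (((0 : ZMod M).val : ℤ))
        + ∑ t ∈ Finset.univ.erase (0 : ZMod M), eAdd M ((t.val : ℤ)) :=
    (Finset.add_sum_erase _ _ (Finset.mem_univ (0 : ZMod M))).symm
  have h0 : eAdd M (((0 : ZMod M).val : ℤ)) = 1 := by
    simp [ZMod.val_zero, eAdd]
  have e1 : ∑ b : (ZMod M)ˣ, eAdd M (((b : ZMod M).val : ℤ))
      = ∑ t : {a : ZMod M // a ≠ 0}, eAdd M ((t.1.val : ℤ)) :=
    Fintype.sum_equiv unitsEquivNeZero _ _ (fun b => by simp)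
  have e2 : ∑ t : {a : ZMod M // a ≠ 0}, eAdd M ((t.1.val : ℤ))
      = ∑ t ∈ Finset.univ.erase (0 : ZMod M), eAdd M ((t.val : ℤ)) := by
    refine (Finset.sum_subtype (Finset.univ.erase (0 : ZMod M)) (fun x => ?_)
      (fun t => eAdd M ((t.val : ℤ)))).symm
    simp
  rw [e1, e2]
  rw [hsplit, h0] at key
  linear_combination key


/-- `S_ψ(Mm, n; QM) = −S_ψ(m, nM̄; Q)` for `M` prime, `(M,Q) = 1`, `(n,M) = 1`. -/
theorem stmt_9 (M : ℕ) [Fact M.Prime] (Q : ℕ) [NeZero Q] (hMQ : Nat.gcd M Q = 1)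
    (p : ℕ) (hp : p.Prime) (hpQ : p ∣ Q) (ψ : DirichletCharacter ℂ p)
    (m n : ℤ) (hn : Int.gcd n M = 1)
    (Mbar : ℤ) (hMbar : (((M : ℤ) * Mbar : ℤ) : ZMod Q) = 1) :
    kloTwist ψ ((M : ℤ) * m) n (Q * M) (hpQ.mul_right M) =
      - kloTwist ψ m (n * Mbar) Q hpQ := by
  have hMp : M.Prime := Fact.out
  have hM0 : M ≠ 0 := hMp.ne_zero
  have hQ0 : Q ≠ 0 := NeZero.ne Q
  haveI : NeZero M := ⟨hM0⟩
  haveI : NeZero (Q * M) := ⟨mul_ne_zero hQ0 hM0⟩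
  -- Bezout
  set u : ℤ := Nat.gcdA M Q with hu_def
  set v : ℤ := Nat.gcdB M Q with hv_def
  have huv : (M : ℤ) * u + (Q : ℤ) * v = 1 := by
    have := Nat.gcd_eq_gcd_ab M Q
    rw [hMQ] at this
    exact_mod_cast this.symm
  have dvdQ : Q ∣ Q * M := dvd_mul_right Q M
  have dvdM : M ∣ Q * M := dvd_mul_left M Q
  set fQ : ZMod (Q * M) →+* ZMod Q := ZMod.castHom dvdQ (ZMod Q) with hfQ
  set fM : ZMod (Q * M) →+* ZMod M := ZMod.castHom dvdM (ZMod M) with hfM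
  set φ : (ZMod (Q * M))ˣ → (ZMod Q)ˣ × (ZMod M)ˣ :=
    fun x => (Units.map fQ.toMonoidHom x, Units.map fM.toMonoidHom x) with hφ
  -- φ is bijective
  have hinj : Function.Injective φ := by
    intro x y hxy
    have h1 : fQ (x : ZMod (Q * M)) = fQ (y : ZMod (Q * M)) :=
      congrArg (fun z : (ZMod Q)ˣ => (z : ZMod Q)) (congrArg Prod.fst hxy)
    have h2 : fM (x : ZMod (Q * M)) = fM (y : ZMod (Q * M)) :=
      congrArg (fun z : (ZMod M)ˣ => (z : ZMod M)) (congrArg Prod.snd hxy)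
    have hq : (x : ZMod (Q * M)).val ≡ (y : ZMod (Q * M)).val [MOD Q] := by
      rw [← ZMod.natCast_eq_natCast_iff]
      simpa [hfQ, ZMod.castHom_apply, ZMod.natCast_val] using h1
    have hm : (x : ZMod (Q * M)).val ≡ (y : ZMod (Q * M)).val [MOD M] := by
      rw [← ZMod.natCast_eq_natCast_iff]
      simpa [hfM, ZMod.castHom_apply, ZMod.natCast_val] using h2
    have hqm : (x : ZMod (Q * M)).val ≡ (y : ZMod (Q * M)).val [MOD Q * M] :=
      (Nat.modEq_and_modEq_iff_modEq_mul (Nat.coprime_comm.mp hMQ)).mp ⟨hq, hm⟩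
    have : ((x : ZMod (Q * M)).val : ZMod (Q * M)) = ((y : ZMod (Q * M)).val : ZMod (Q * M)) :=
      (ZMod.natCast_eq_natCast_iff _ _ _).mpr hqm
    rw [ZMod.natCast_val, ZMod.natCast_val, ZMod.cast_id, ZMod.cast_id] at this
    exact Units.ext this
  have hbij : Function.Bijective φ := by
    rw [Fintype.bijective_iff_injective_and_card]
    refine ⟨hinj, ?_⟩
    rw [Fintype.card_prod, ZMod.card_units_eq_totient, ZMod.card_units_eq_totient,
      ZMod.card_units_eq_totient, Nat.totient_mul (Nat.coprime_comm.mp hMQ)]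
  -- congruence facts
  have huQ : ((M : ZMod Q)) * ((u : ℤ) : ZMod Q) = 1 := by
    have := congrArg (fun z : ℤ => (z : ZMod Q)) huv
    push_cast at this
    rw [ZMod.natCast_self] at this
    simpa using this
  have hubar : ((u : ℤ) : ZMod Q) = ((Mbar : ℤ) : ZMod Q) := by
    have h1 : ((M : ℤ) : ZMod Q) * ((Mbar : ℤ) : ZMod Q) = 1 := by
      push_cast at hMbar ⊢
      exact_mod_cast hMbar
    push_cast at huQ h1 ⊢
    linear_combination ((Mbar : ℤ) : ZMod Q) * huQ - ((u : ℤ) : ZMod Q) * h1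
  have hvM : ((Q : ZMod M)) * ((v : ℤ) : ZMod M) = 1 := by
    have := congrArg (fun z : ℤ => (z : ZMod M)) huv
    push_cast at this
    rw [ZMod.natCast_self] at this
    simpa using this
  -- units of ZMod M
  have hnM : IsUnit ((n : ZMod M)) := by
    obtain ⟨a, b, hab⟩ := Int.isCoprime_iff_gcd_eq_one.mpr hn
    have := congrArg (fun z : ℤ => (z : ZMod M)) hab
    push_cast at this
    rw [ZMod.natCast_self] at this
    exact IsUnit.of_mul_eq_one _ (by rw [mul_comm]; simpa using this)
  have hvU : IsUnit (((v : ℤ) : ZMod M)) :=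
    IsUnit.of_mul_eq_one _ (by rw [mul_comm]; exact hvM)
  have hw : IsUnit (((n * v : ℤ) : ZMod M)) := by
    push_cast
    exact hnM.mul hvU
  set w : (ZMod M)ˣ := hw.unit with hw_def
  have hwc : (w : ZMod M) = ((n * v : ℤ) : ZMod M) := hw.unit_spec
  -- summands
  set A : (ZMod Q)ˣ → ℂ := fun a =>
    ψ (ZMod.castHom hpQ (ZMod p) (a : ZMod Q)) *
      eAdd Q (m * ((a : ZMod Q).val : ℤ)
        + (n * Mbar) * (((a⁻¹ : (ZMod Q)ˣ) : ZMod Q).val : ℤ)) with hA_def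
  set B : (ZMod M)ˣ → ℂ := fun b =>
    eAdd M ((n * v) * (((b⁻¹ : (ZMod M)ˣ) : ZMod M).val : ℤ)) with hB_def
  -- per-term identity
  have hterm : ∀ x : (ZMod (Q * M))ˣ,
      ψ (ZMod.castHom (hpQ.mul_right M) (ZMod p) (x : ZMod (Q * M))) *
        eAdd (Q * M) (((M : ℤ) * m) * (((x : ZMod (Q * M)).val : ℤ))
          + n * ((((x⁻¹ : (ZMod (Q * M))ˣ) : ZMod (Q * M)).val : ℤ)))
        = A (φ x).1 * B (φ x).2 := by
    intro x
    set a : (ZMod Q)ˣ := Units.map fQ.toMonoidHom x with ha_def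
    set b : (ZMod M)ˣ := Units.map fM.toMonoidHom x with hb_def
    have hproj : A (φ x).1 * B (φ x).2 = A a * B b := rfl
    rw [hproj]
    have hpsi : ψ (ZMod.castHom (hpQ.mul_right M) (ZMod p) (x : ZMod (Q * M)))
        = ψ (ZMod.castHom hpQ (ZMod p) ((a : ZMod Q))) := by
      have hc := ZMod.castHom_comp hpQ dvdQ
      have h2 : ZMod.castHom (hpQ.mul_right M) (ZMod p) (x : ZMod (Q * M))
          = (ZMod.castHom hpQ (ZMod p)).comp fQ (x : ZMod (Q * M)) := by
        rw [hc]
      rw [h2]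
      rfl
    have hX : ((((x : ZMod (Q * M)).val : ℕ) : ZMod Q)) = ((a : ZMod Q)) := by
      rw [ZMod.natCast_val]
      exact (ZMod.castHom_apply _).symm
    have hXinv : (((((x⁻¹ : (ZMod (Q * M))ˣ) : ZMod (Q * M)).val : ℕ) : ZMod Q))
        = (((a⁻¹ : (ZMod Q)ˣ) : ZMod Q)) := by
      rw [ZMod.natCast_val, ha_def, ← map_inv]
      exact (ZMod.castHom_apply _).symm
    have hXinvM : (((((x⁻¹ : (ZMod (Q * M))ˣ) : ZMod (Q * M)).val : ℕ) : ZMod M))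
        = (((b⁻¹ : (ZMod M)ˣ) : ZMod M)) := by
      rw [ZMod.natCast_val, hb_def, ← map_inv]
      exact (ZMod.castHom_apply _).symm
    have haval : (((a : ZMod Q).val : ℕ) : ZMod Q) = ((a : ZMod Q)) := by
      rw [ZMod.natCast_val, ZMod.cast_id]
    have hainv : ((((a⁻¹ : (ZMod Q)ˣ) : ZMod Q).val : ℕ) : ZMod Q)
        = (((a⁻¹ : (ZMod Q)ˣ) : ZMod Q)) := by
      rw [ZMod.natCast_val, ZMod.cast_id]
    have hbinv : ((((b⁻¹ : (ZMod M)ˣ) : ZMod M).val : ℕ) : ZMod M)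
        = (((b⁻¹ : (ZMod M)ˣ) : ZMod M)) := by
      rw [ZMod.natCast_val, ZMod.cast_id]
    rw [eAdd_split Q M hQ0 hM0 u v _ huv, hpsi]
    have e1 : eAdd Q (u * (((M : ℤ) * m) * (((x : ZMod (Q * M)).val : ℤ))
          + n * ((((x⁻¹ : (ZMod (Q * M))ˣ) : ZMod (Q * M)).val : ℤ))))
        = eAdd Q (m * ((a : ZMod Q).val : ℤ)
          + (n * Mbar) * (((a⁻¹ : (ZMod Q)ˣ) : ZMod Q).val : ℤ)) := by
      apply eAdd_congr
      push_cast
      rw [hX, hXinv, haval, hainv]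
      push_cast at huQ hubar
      linear_combination (m * ((a : ZMod Q))) * huQ
        + (n * (((a⁻¹ : (ZMod Q)ˣ) : ZMod Q))) * hubar
    have e2 : eAdd M (v * (((M : ℤ) * m) * (((x : ZMod (Q * M)).val : ℤ))
          + n * ((((x⁻¹ : (ZMod (Q * M))ˣ) : ZMod (Q * M)).val : ℤ))))
        = B b := by
      simp only [hB_def]
      apply eAdd_congr
      push_cast
      rw [hXinvM, ← Units.val_inv_eq_inv_val, hbinv, ZMod.natCast_self]
      ring
    rw [e1, e2]
    simp only [hA_def]
    ring
  -- assemble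
  have hB_sum : ∑ b : (ZMod M)ˣ, B b = -1 := by
    have s1 : ∑ b : (ZMod M)ˣ, B b = ∑ b : (ZMod M)ˣ, eAdd M ((n * v) * ((b : ZMod M).val : ℤ)) := by
      refine (Fintype.sum_equiv (Equiv.inv (ZMod M)ˣ) _ _ (fun b => ?_)).symm
      rw [hB_def]
      simp only [Equiv.inv_apply, inv_inv]
    have s2 : ∀ b : (ZMod M)ˣ, eAdd M ((n * v) * ((b : ZMod M).val : ℤ))
        = eAdd M ((((w * b : (ZMod M)ˣ) : ZMod M)).val : ℤ) := by
      intro b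
      apply eAdd_congr
      push_cast [ZMod.natCast_val, ZMod.cast_id]
      rw [hwc]
      push_cast
      ring
    have s3 : ∑ b : (ZMod M)ˣ, eAdd M ((((w * b : (ZMod M)ˣ) : ZMod M)).val : ℤ)
        = ∑ b : (ZMod M)ˣ, eAdd M (((b : ZMod M)).val : ℤ) :=
      Fintype.sum_equiv (Equiv.mulLeft w) _ _ (fun b => rfl)
    rw [s1]
    simp_rw [s2]
    rw [s3, sum_units_eAdd M hMp]
  calc kloTwist ψ ((M : ℤ) * m) n (Q * M) (hpQ.mul_right M)
      = ∑ x : (ZMod (Q * M))ˣ, A (φ x).1 * B (φ x).2 := by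
        rw [kloTwist]
        exact Finset.sum_congr rfl (fun x _ => hterm x)
    _ = ∑ ab : (ZMod Q)ˣ × (ZMod M)ˣ, A ab.1 * B ab.2 :=
        Fintype.sum_bijective φ hbij _ _ (fun x => rfl)
    _ = (∑ a : (ZMod Q)ˣ, A a) * (∑ b : (ZMod M)ˣ, B b) := by
        rw [Fintype.sum_prod_type, ← Finset.sum_mul_sum]
    _ = - kloTwist ψ m (n * Mbar) Q hpQ := by
        rw [hB_sum, kloTwist]
        ring
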